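/- A topologically finitely generated abelian pro-p group is topologically Noetherian: every ascending chain of closed subgroups has a maximal element. -/

import Mathlib

open Filter Topology

section Aux

variable {G : Type*} [CommGroup G] [TopologicalSpace G] [IsTopologicalGroup G]
  [CompactSpace G] [TotallyDisconnectedSpace G] [T2Space G]

/-- In a compact totally disconnected Hausdorff group, every neighborhood of `1` contains an
open subgroup. -/
lemma aux_nhds_one_subgroup {U : Set G} (hU : U ∈ 𝓝 (1 : G)) :
    ∃ N : OpenSubgroup G, (N : Set G) ⊆ U := by
  obtain ⟨V, hVU, hVopen, hV1⟩ := mem_nhds_iff.mp hU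
  obtain ⟨W, hWclopen, hW1, hWV⟩ := compact_exists_isClopen_in_isOpen hVopen hV1
  obtain ⟨N, hN⟩ := IsTopologicalGroup.exist_openSubgroup_sub_clopen_nhds_of_one hWclopen hW1
  exact ⟨N, fun x hx => hVU (hWV (hN hx))⟩

lemma aux_nhds_basis {x : G} {U : Set G} (hU : U ∈ 𝓝 x) :
    ∃ N : OpenSubgroup G, ∀ y : G, y / x ∈ N → y ∈ U := by
  have hc : Continuous fun n : G => n * x := continuous_mul_right x
  have h1 : (fun n : G => n * x) ⁻¹' U ∈ 𝓝 (1 : G) := by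
    apply hc.continuousAt.preimage_mem_nhds
    simpa using hU
  obtain ⟨N, hN⟩ := aux_nhds_one_subgroup h1
  refine ⟨N, fun y hy => ?_⟩
  have := hN hy
  simpa using this

lemma aux_tendsto_one {α : Type*} {l : Filter α} {v : α → G}
    (h : ∀ N : OpenSubgroup G, ∀ᶠ a in l, v a ∈ N) : Tendsto v l (𝓝 1) := by
  rw [tendsto_def]
  intro U hU
  obtain ⟨N, hN⟩ := aux_nhds_one_subgroup hU
  exact (h N).mono fun a ha => hN ha

lemma aux_exists_lim (u : ℕ → G)
    (hu : ∀ N : OpenSubgroup G, ∃ e : ℕ, ∀ k ≥ e, ∀ l ≥ e, u l / u k ∈ N) :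
    ∃ h : G, Tendsto u atTop (𝓝 h) := by
  obtain ⟨h, -, hcl⟩ :=
    isCompact_univ.exists_clusterPt (f := Filter.map u atTop) (le_principal_iff.mpr univ_mem)
  refine ⟨h, ?_⟩
  rw [tendsto_def]
  intro U hU
  obtain ⟨N, hN⟩ := aux_nhds_basis hU
  obtain ⟨e, he⟩ := hu N
  have hco : (fun y : G => y / h) ⁻¹' (N : Set G) ∈ 𝓝 h := by
    refine (N.isOpen.preimage (continuous_id.div' continuous_const)).mem_nhds ?_
    simpa using N.one_mem
  have hfreq : ∃ᶠ k in atTop, u k ∈ (fun y : G => y / h) ⁻¹' (N : Set G) :=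
    (mapClusterPt_iff_frequently.mp hcl) _ hco
  obtain ⟨k, hkmem, hke⟩ := (hfreq.and_eventually (eventually_ge_atTop e)).exists
  filter_upwards [eventually_ge_atTop e] with l hl
  refine hN _ ?_
  have hmul := mul_mem (he k hke l hl) hkmem
  simp only [Set.mem_preimage] at hmul
  have heq : u l / u k * (u k / h) = u l / h := by
    simp [div_eq_mul_inv, mul_assoc]
  rwa [heq] at hmul

end Aux

section Padic

variable {p : ℕ} [hp : Fact p.Prime]

lemma aux_int_dvd {e : ℕ} {m : ℤ} (h : (p : ℤ_[p]) ^ e ∣ (m : ℤ_[p])) :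
    (p : ℤ) ^ e ∣ m := by
  have h1 : ((m : ℤ_[p])) ∈ Ideal.span {(p : ℤ_[p]) ^ e} := Ideal.mem_span_singleton.mpr h
  have h2 : ‖(m : ℤ_[p])‖ ≤ (p : ℝ) ^ (-e : ℤ) :=
    (PadicInt.norm_le_pow_iff_mem_span_pow _ _).mpr h1
  have h3 := PadicInt.norm_int_le_pow_iff_dvd.mp h2
  exact_mod_cast h3

lemma aux_appr_dvd (z : ℤ_[p]) (k : ℕ) :
    (p : ℤ_[p]) ^ k ∣ z - ((z.appr k : ℤ) : ℤ_[p]) := by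
  have h := z.appr_spec k
  rw [Ideal.mem_span_singleton] at h
  have hc : ((z.appr k : ℤ) : ℤ_[p]) = ((z.appr k : ℕ) : ℤ_[p]) := by push_cast; ring
  rw [hc]
  exact h

lemma aux_appr_tendsto (z : ℤ_[p]) :
    Tendsto (fun k => (((z.appr k : ℤ)) : ℤ_[p])) atTop (𝓝 z) := by
  rw [tendsto_iff_dist_tendsto_zero]
  have hplt : (1 : ℝ) < (p : ℝ) := by exact_mod_cast hp.out.one_lt
  apply squeeze_zero (g := fun k => ((p : ℝ)⁻¹) ^ k) (fun k => dist_nonneg)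
  · intro k
    have h1 : ‖z - ((z.appr k : ℤ) : ℤ_[p])‖ ≤ (p : ℝ) ^ (-k : ℤ) := by
      rw [PadicInt.norm_le_pow_iff_mem_span_pow]
      exact Ideal.mem_span_singleton.mpr (aux_appr_dvd z k)
    have h2 : dist (((z.appr k : ℤ) : ℤ_[p])) z = ‖z - ((z.appr k : ℤ) : ℤ_[p])‖ := by
      rw [dist_eq_norm, norm_sub_rev]
    rw [h2]
    refine h1.trans (le_of_eq ?_)
    rw [zpow_neg, zpow_natCast, inv_pow]
  · exact tendsto_pow_atTop_nhds_zero_of_lt_one (by positivity)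
      (by rw [inv_lt_one_iff₀]; right; exact hplt)

end Padic

/-- A topologically finitely generated abelian pro-`p` group is topologically Noetherian:
every ascending chain of closed subgroups has a maximal element. -/
theorem topFG_abelian_pro_p_topologically_noetherian
    (p : ℕ) (hp : p.Prime) (G : Type*) [CommGroup G] [TopologicalSpace G]
    [IsTopologicalGroup G] [CompactSpace G] [TotallyDisconnectedSpace G] [T2Space G]
    (htfg : ∃ S : Finset G, Dense (Subgroup.closure (S : Set G) : Set G))
    (hpro_p : ∀ (N : Subgroup G) [N.Normal], IsOpen (N : Set G) → IsPGroup p (G ⧸ N)) :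
    ∀ f : ℕ → Subgroup G, Monotone f → (∀ n : ℕ, IsClosed (f n : Set G)) →
      ∃ n : ℕ, ∀ m : ℕ, f m ≤ f n := by
  intro f hf hfc
  haveI : Fact p.Prime := ⟨hp⟩
  classical
  obtain ⟨S, hS⟩ := htfg
  -- exponent of open subgroups
  have hexp : ∀ N : OpenSubgroup G, ∃ e : ℕ, ∀ (g : G) (n : ℤ), (p : ℤ) ^ e ∣ n → g ^ n ∈ N := by
    intro N
    haveI := N.toSubgroup.quotient_finite_of_isOpen N.isOpen
    have hpg := hpro_p N.toSubgroup N.isOpen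
    obtain ⟨e, he⟩ := IsPGroup.iff_card.mp hpg
    refine ⟨e, fun g n hn => ?_⟩
    obtain ⟨t, rfl⟩ := hn
    have h2 : N.toSubgroup.index = p ^ e := by
      rw [Subgroup.index]; exact he
    have hg : g ^ ((p : ℤ) ^ e) ∈ N.toSubgroup := by
      have h1 := N.toSubgroup.pow_index_mem g
      rw [h2] at h1
      have hc : ((p : ℤ) ^ e) = ((p ^ e : ℕ) : ℤ) := by push_cast; ring
      rw [hc, zpow_natCast]
      exact h1
    rw [zpow_mul]
    exact zpow_mem hg t
  -- existence of p-adic powers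
  have hex : ∀ (g : G) (z : ℤ_[p]),
      ∃ h : G, Tendsto (fun k => g ^ ((z.appr k : ℤ))) atTop (𝓝 h) := by
    intro g z
    apply aux_exists_lim
    intro N
    obtain ⟨e, he⟩ := hexp N
    refine ⟨e, fun k hk l hl => ?_⟩
    rw [div_eq_mul_inv, ← zpow_sub]
    apply he
    apply aux_int_dvd
    have hk' : (p : ℤ_[p]) ^ e ∣ z - ((z.appr k : ℤ) : ℤ_[p]) :=
      dvd_trans (pow_dvd_pow _ hk) (aux_appr_dvd z k)
    have hl' : (p : ℤ_[p]) ^ e ∣ z - ((z.appr l : ℤ) : ℤ_[p]) :=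
      dvd_trans (pow_dvd_pow _ hl) (aux_appr_dvd z l)
    have hcast : (((z.appr l : ℤ) - (z.appr k : ℤ) : ℤ) : ℤ_[p]) =
        (z - ((z.appr k : ℤ) : ℤ_[p])) - (z - ((z.appr l : ℤ) : ℤ_[p])) := by
      push_cast; ring
    rw [hcast]
    exact dvd_sub hk' hl'
  choose ppow hppow using hex
  -- membership of p-adic powers in open subgroups
  have hmem : ∀ (N : OpenSubgroup G) (e : ℕ),
      (∀ (g : G) (n : ℤ), (p : ℤ) ^ e ∣ n → g ^ n ∈ N) →
      ∀ (g : G) (z : ℤ_[p]), (p : ℤ_[p]) ^ e ∣ z → ppow g z ∈ N := by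
    intro N e he g z hz
    apply N.isClosed.mem_of_tendsto (hppow g z)
    filter_upwards [eventually_ge_atTop e] with k hk
    apply he
    apply aux_int_dvd
    have hcast : (((z.appr k : ℤ)) : ℤ_[p]) = z - (z - ((z.appr k : ℤ) : ℤ_[p])) := by ring
    rw [hcast]
    exact dvd_sub hz (dvd_trans (pow_dvd_pow _ hk) (aux_appr_dvd z k))
  -- `ppow` at integer arguments
  have hcast : ∀ (g : G) (n : ℤ), ppow g ((n : ℤ_[p])) = g ^ n := by
    intro g n
    have h1 : Tendsto (fun k => g ^ ((((n : ℤ_[p]).appr k : ℤ)) - n)) atTop (𝓝 1) := by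
      apply aux_tendsto_one
      intro N
      obtain ⟨e, he⟩ := hexp N
      filter_upwards [eventually_ge_atTop e] with k hk
      apply he
      apply aux_int_dvd
      have hc : ((((n : ℤ_[p]).appr k : ℤ) - n : ℤ) : ℤ_[p]) =
          -((n : ℤ_[p]) - ((((n : ℤ_[p]).appr k : ℤ)) : ℤ_[p])) := by push_cast; ring
      rw [hc]
      exact dvd_neg.mpr (dvd_trans (pow_dvd_pow _ hk) (aux_appr_dvd _ k))
    have h2 := h1.mul (tendsto_const_nhds (x := g ^ n))
    have h3 : Tendsto (fun k => g ^ (((n : ℤ_[p]).appr k : ℤ))) atTop (𝓝 (1 * g ^ n)) := by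
      refine h2.congr fun k => ?_
      rw [← zpow_add]
      congr 1
      ring
    rw [one_mul] at h3
    exact tendsto_nhds_unique (hppow g (n : ℤ_[p])) h3
  have h0 : ∀ g : G, ppow g 0 = 1 := by
    intro g
    have := hcast g 0
    simpa using this
  have h1g : ∀ g : G, ppow g 1 = g := by
    intro g
    have := hcast g 1
    simpa using this
  -- additivity
  have hadd : ∀ (g : G) (z w : ℤ_[p]), ppow g (z + w) = ppow g z * ppow g w := by
    intro g z w
    have h1 : Tendsto (fun k => g ^ ((z.appr k : ℤ)) * g ^ ((w.appr k : ℤ))) atTop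
        (𝓝 (ppow g z * ppow g w)) := (hppow g z).mul (hppow g w)
    have h2 : Tendsto
        (fun k => g ^ ((((z + w).appr k : ℤ)) - (z.appr k : ℤ) - (w.appr k : ℤ))) atTop
        (𝓝 1) := by
      apply aux_tendsto_one
      intro N
      obtain ⟨e, he⟩ := hexp N
      filter_upwards [eventually_ge_atTop e] with k hk
      apply he
      apply aux_int_dvd
      have hc : (((((z + w).appr k : ℤ)) - (z.appr k : ℤ) - (w.appr k : ℤ) : ℤ) : ℤ_[p]) =
          (z - ((z.appr k : ℤ) : ℤ_[p])) + (w - ((w.appr k : ℤ) : ℤ_[p]))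
            - ((z + w) - (((z + w).appr k : ℤ) : ℤ_[p])) := by push_cast; ring
      rw [hc]
      have d1 := dvd_trans (pow_dvd_pow ((p : ℤ_[p])) hk) (aux_appr_dvd z k)
      have d2 := dvd_trans (pow_dvd_pow ((p : ℤ_[p])) hk) (aux_appr_dvd w k)
      have d3 := dvd_trans (pow_dvd_pow ((p : ℤ_[p])) hk) (aux_appr_dvd (z + w) k)
      exact dvd_sub (dvd_add d1 d2) d3
    have h3 := h2.mul h1
    rw [one_mul] at h3
    have h4 : Tendsto (fun k => g ^ (((z + w).appr k : ℤ))) atTop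
        (𝓝 (ppow g z * ppow g w)) := by
      refine h3.congr fun k => ?_
      rw [← zpow_add, ← zpow_add]
      congr 1
      ring
    exact tendsto_nhds_unique (hppow g (z + w)) h4
  -- continuity in the exponent
  have hcont : ∀ g : G, Continuous fun z : ℤ_[p] => ppow g z := by
    intro g
    rw [continuous_iff_continuousAt]
    intro z
    have h1 : Tendsto (fun w => ppow g (w - z)) (𝓝 z) (𝓝 1) := by
      apply aux_tendsto_one
      intro N
      obtain ⟨e, he⟩ := hexp N
      have hppos : (0 : ℝ) < (p : ℝ) ^ (-e : ℤ) := by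
        apply zpow_pos
        exact_mod_cast hp.pos
      filter_upwards [Metric.ball_mem_nhds z hppos] with w hw
      apply hmem N e he
      have hn : ‖w - z‖ ≤ (p : ℝ) ^ (-e : ℤ) := by
        rw [Metric.mem_ball, dist_eq_norm] at hw
        exact le_of_lt hw
      exact Ideal.mem_span_singleton.mp ((PadicInt.norm_le_pow_iff_mem_span_pow _ _).mp hn)
    have h2 := h1.mul (tendsto_const_nhds (x := ppow g z))
    rw [one_mul] at h2
    refine h2.congr fun w => ?_
    rw [← hadd]
    congr 1
    ring
  -- the product map from `ℤ_[p]^S`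
  haveI : Fintype {x // x ∈ S} := FinsetCoe.fintype S
  set ι := {x // x ∈ S} with hι
  let gen : ι → G := fun i => (i : G)
  let φ : (ι → ℤ_[p]) → G := fun x => ∏ i, ppow (gen i) (x i)
  have hφcont : Continuous φ :=
    continuous_finset_prod _ fun i _ => (hcont (gen i)).comp (continuous_apply i)
  have hφadd : ∀ x y, φ (x + y) = φ x * φ y := by
    intro x y
    simp only [φ, Pi.add_apply, hadd]
    rw [Finset.prod_mul_distrib]
  have hφ0 : φ 0 = 1 := by
    simp only [φ, Pi.zero_apply, h0]
    exact Finset.prod_const_one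
  have hφneg : ∀ x, φ (-x) = (φ x)⁻¹ := by
    intro x
    have h := hφadd x (-x)
    rw [show x + -x = (0 : ι → ℤ_[p]) from by abel, hφ0] at h
    exact eq_inv_of_mul_eq_one_right h.symm
  have hφz : ∀ (m : ℤ) (x : ι → ℤ_[p]), φ (m • x) = (φ x) ^ m := by
    intro m x
    induction m using Int.induction_on with
    | zero => simpa using hφ0
    | succ n ih =>
      rw [add_smul, one_smul, hφadd, ih, zpow_add, zpow_one]
    | pred n ih =>
      rw [sub_smul, one_smul, sub_eq_add_neg, hφadd, ih, hφneg, ← zpow_sub_one]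
  -- surjectivity
  let T : Subgroup G :=
    { carrier := Set.range φ
      one_mem' := ⟨0, hφ0⟩
      mul_mem' := by
        rintro a b ⟨x, rfl⟩ ⟨y, rfl⟩
        exact ⟨x + y, hφadd x y⟩
      inv_mem' := by
        rintro a ⟨x, rfl⟩
        exact ⟨-x, hφneg x⟩ }
  have hTclosed : IsClosed (Set.range φ) := by
    rw [← Set.image_univ]
    exact (isCompact_univ.image hφcont).isClosed
  have hSsub : (S : Set G) ⊆ Set.range φ := by
    intro s hs
    classical
    let x : ι → ℤ_[p] := Pi.single (⟨s, hs⟩ : ι) (1 : ℤ_[p])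
    refine ⟨x, ?_⟩
    have hps := Fintype.prod_eq_single (⟨s, hs⟩ : ι)
      (f := fun j => ppow (gen j) (x j))
      (fun j hj => by simp only [x, Pi.single_eq_of_ne hj]; exact h0 _)
    show (∏ j, ppow (gen j) (x j)) = s
    rw [hps]
    simp only [x, Pi.single_eq_same]
    exact h1g _
  have hsub2 : (Subgroup.closure (S : Set G) : Set G) ⊆ Set.range φ :=
    (Subgroup.closure_le T).mpr hSsub
  have hsurj : ∀ h : G, ∃ x, φ x = h := by
    intro h
    have hmem1 : h ∈ closure (Subgroup.closure (S : Set G) : Set G) := by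
      rw [hS.closure_eq]
      trivial
    have hmem2 := closure_mono hsub2 hmem1
    rwa [hTclosed.closure_eq] at hmem2
  -- the pulled-back chain of submodules
  let F : ℕ → Submodule ℤ_[p] (ι → ℤ_[p]) := fun n =>
    { carrier := φ ⁻¹' (f n : Set G)
      zero_mem' := by
        show φ 0 ∈ (f n : Set G)
        rw [hφ0]
        exact (f n).one_mem
      add_mem' := by
        intro x y hx hy
        show φ (x + y) ∈ (f n : Set G)
        rw [hφadd]
        exact mul_mem hx hy
      smul_mem' := by
        intro c x hx
        have hclosed : IsClosed (φ ⁻¹' (f n : Set G)) := (hfc n).preimage hφcont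
        have hint : ∀ m : ℤ, ((m : ℤ_[p]) • x) ∈ φ ⁻¹' (f n : Set G) := by
          intro m
          show φ ((m : ℤ_[p]) • x) ∈ (f n : Set G)
          rw [Int.cast_smul_eq_zsmul, hφz]
          exact zpow_mem hx m
        have hc : Tendsto (fun k => (((c.appr k : ℤ) : ℤ_[p])) • x) atTop (𝓝 (c • x)) :=
          (aux_appr_tendsto c).smul_const x
        exact hclosed.mem_of_tendsto hc (Filter.Eventually.of_forall fun k => hint _) }
  have hFmono : Monotone F := fun a b hab x hx => hf hab hx
  obtain ⟨n, hn⟩ := monotone_stabilizes_iff_noetherian.mpr inferInstance ⟨F, hFmono⟩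
  refine ⟨n, fun m => ?_⟩
  rcases le_total m n with h | h
  · exact hf h
  · intro g hg
    obtain ⟨x, rfl⟩ := hsurj g
    have hx : x ∈ F m := hg
    have heq : F n = F m := hn m h
    rw [← heq] at hx
    exact hx
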